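/- Let H be a finitely generated abelian group and h ∈ H an element of infinite order. Then h − 1 is a non-zerodivisor in the group ring ℤ[H]. -/

import Mathlib

/-- In the integral group ring of a finitely generated abelian group, `h - 1` is a
non-zerodivisor whenever `h` has infinite order. -/
theorem sub_one_nonZeroDivisor {H : Type*} [CommGroup H] [Group.FG H]
    (h : H) (hh : ¬ IsOfFinOrder h) :
    (MonoidAlgebra.of ℤ H h - 1) ∈ nonZeroDivisors (MonoidAlgebra ℤ H) := by
  rw [mem_nonZeroDivisors_iff_right]
  intro y hy
  have hy' : y * MonoidAlgebra.of ℤ H h = y := by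
    have := sub_eq_zero.mp (by rwa [mul_sub, mul_one] at hy)
    exact this
  -- pointwise: y (a * h⁻¹) = y a
  have key : ∀ a : H, y.coeff (a * h⁻¹) = y.coeff a := by
    intro a
    have := congrArg (fun f : MonoidAlgebra ℤ H => f.coeff a) hy'
    simpa [MonoidAlgebra.of_apply, MonoidAlgebra.mul_single_apply] using this
  have key' : ∀ (n : ℕ) (a : H), y.coeff (a * h⁻¹ ^ n) = y.coeff a := by
    intro n
    induction n with
    | zero => simp
    | succ k ih =>
      intro a
      rw [pow_succ, ← mul_assoc]
      rw [key (a * h⁻¹ ^ k)]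
      exact ih a
  by_contra hne
  obtain ⟨a, ha⟩ := Finsupp.ne_iff.mp (mt MonoidAlgebra.coeff_eq_zero.mp hne)
  simp only [Finsupp.coe_zero, Pi.zero_apply] at ha
  have hinj : Function.Injective (fun n : ℕ => a * h⁻¹ ^ n) := by
    intro m n hmn
    have hinv : ¬ IsOfFinOrder h⁻¹ := by simpa using hh
    exact injective_pow_iff_not_isOfFinOrder.mpr hinv (mul_left_cancel hmn)
  have hmem : ∀ n : ℕ, a * h⁻¹ ^ n ∈ y.coeff.support := by
    intro n
    rw [Finsupp.mem_support_iff, key' n a]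
    exact ha
  exact Set.infinite_of_injective_forall_mem hinj (fun n => hmem n) y.coeff.support.finite_toSet
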